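/- Let h : ℂ → ℂ be the piecewise linear map h(z) = 2z + conj(z) for Im z ≥ 0 and h(z) = z + 2·conj(z) for Im z ≤ 0. Then h is Lipschitz continuous, satisfies h_z · conj(h_{z̄}) ≡ 2 almost everywhere (so its Hopf differential is holomorphic), but h is not harmonic on any neighborhood of a point of the real axis. -/

import Mathlib

open Complex MeasureTheory Metric Filter
open scoped Real Topology

/-- Wirtinger derivative ∂f/∂z = (∂f/∂x - i ∂f/∂y)/2. -/
noncomputable def wz (f : ℂ → ℂ) (z : ℂ) : ℂ :=
  (fderiv ℝ f z 1 - Complex.I * fderiv ℝ f z Complex.I) / 2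

/-- Wirtinger derivative ∂f/∂z̄ = (∂f/∂x + i ∂f/∂y)/2. -/
noncomputable def wzbar (f : ℂ → ℂ) (z : ℂ) : ℂ :=
  (fderiv ℝ f z 1 + Complex.I * fderiv ℝ f z Complex.I) / 2

/-- Complex Laplacian Δf = ∂²f/∂x² + ∂²f/∂y². -/
noncomputable def lapC (f : ℂ → ℂ) (z : ℂ) : ℂ :=
  fderiv ℝ (fun w => fderiv ℝ f w 1) z 1 + fderiv ℝ (fun w => fderiv ℝ f w Complex.I) z Complex.I

/-- A map is harmonic on `U` if it is `C²` there with vanishing Laplacian. -/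
def HarmonicOnC (f : ℂ → ℂ) (U : Set ℂ) : Prop :=
  ContDiffOn ℝ 2 f U ∧ ∀ z ∈ U, lapC f z = 0

private lemma hasF_up (z : ℂ) : HasFDerivAt (fun w : ℂ => 2*w + (starRingEnd ℂ) w)
    ((2:ℂ) • (ContinuousLinearMap.id ℝ ℂ) + (Complex.conjCLE : ℂ →L[ℝ] ℂ)) z := by
  have h1 : HasFDerivAt (fun w : ℂ => (2:ℂ) * w) ((2:ℂ) • ContinuousLinearMap.id ℝ ℂ) z := by
    exact (hasFDerivAt_id z).const_smul (2:ℂ)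
  exact h1.add (Complex.conjCLE.toContinuousLinearMap.hasFDerivAt)

private lemma hasF_lo (z : ℂ) : HasFDerivAt (fun w : ℂ => w + 2 * (starRingEnd ℂ) w)
    ((ContinuousLinearMap.id ℝ ℂ) + (2:ℂ) • (Complex.conjCLE : ℂ →L[ℝ] ℂ)) z := by
  have h2 : HasFDerivAt (fun w : ℂ => (2:ℂ) * (starRingEnd ℂ) w)
      ((2:ℂ) • (Complex.conjCLE : ℂ →L[ℝ] ℂ)) z := by
    exact
      (Complex.conjCLE.toContinuousLinearMap.hasFDerivAt (x := z)).const_smul (2:ℂ)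
  exact (hasFDerivAt_id z).add h2

theorem stmt1 (h : ℂ → ℂ)
    (hdef : ∀ z : ℂ, h z = if 0 ≤ z.im then 2 * z + (starRingEnd ℂ) z
        else z + 2 * (starRingEnd ℂ) z) :
    (∃ K : NNReal, LipschitzWith K h) ∧
    (∀ᵐ z : ℂ ∂volume, wz h z * (starRingEnd ℂ) (wzbar h z) = 2) ∧
    (∀ x : ℝ, ∀ U : Set ℂ, IsOpen U → (x : ℂ) ∈ U → ¬ HarmonicOnC h U) := by
  have hre : ∀ z : ℂ, (h z).re = 3 * z.re := by
    intro z
    rw [hdef z]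
    split_ifs <;> simp [Complex.add_re, Complex.mul_re] <;> ring
  have him : ∀ z : ℂ, (h z).im = |z.im| := by
    intro z
    rw [hdef z]
    split_ifs with hz
    · rw [_root_.abs_of_nonneg hz]; simp [Complex.add_im, Complex.mul_im]; ring
    · rw [_root_.abs_of_neg (lt_of_not_ge hz)]; simp [Complex.add_im, Complex.mul_im]; ring
  refine ⟨⟨3, ?_⟩, ?_, ?_⟩
  · -- Lipschitz
    apply LipschitzWith.of_dist_le_mul
    intro z w
    rw [Complex.dist_eq_re_im, Complex.dist_eq_re_im, hre, hre, him, him]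
    have h3 : ((3:NNReal):ℝ) = 3 := rfl
    rw [h3]
    have h9 : (3:ℝ) * Real.sqrt ((z.re - w.re) ^ 2 + (z.im - w.im) ^ 2)
        = Real.sqrt (9 * ((z.re - w.re) ^ 2 + (z.im - w.im) ^ 2)) := by
      rw [Real.sqrt_mul (by norm_num), show (9:ℝ) = 3^2 by norm_num,
        Real.sqrt_sq (by norm_num)]
    rw [h9]
    apply Real.sqrt_le_sqrt
    have habs : (|z.im| - |w.im|)^2 ≤ (z.im - w.im)^2 := by
      have h1 := abs_abs_sub_abs_le_abs_sub z.im w.im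
      calc (|z.im| - |w.im|)^2 = |(|z.im| - |w.im|)|^2 := (_root_.sq_abs _).symm
        _ ≤ |z.im - w.im|^2 := by
            apply pow_le_pow_left₀ (abs_nonneg _) h1
        _ = (z.im - w.im)^2 := _root_.sq_abs _
    nlinarith [sq_nonneg (z.re - w.re)]
  · -- a.e. statement
    have hline : volume {z : ℂ | z.im = 0} = 0 := by
      have : {z : ℂ | z.im = 0} = (LinearMap.ker Complex.imLm : Set ℂ) := by
        ext z; simp [LinearMap.mem_ker]
      rw [this]
      apply Measure.addHaar_submodule
      rw [Ne, LinearMap.ker_eq_top]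
      intro hk
      have : Complex.imLm Complex.I = (0 : ℂ →ₗ[ℝ] ℝ) Complex.I := by rw [hk]
      simp at this
    rw [MeasureTheory.ae_iff]
    apply measure_mono_null _ hline
    intro z hz
    simp only [Set.mem_setOf_eq] at hz ⊢
    by_contra him0
    apply hz
    rcases lt_or_gt_of_ne him0 with hneg | hpos
    · -- lower half plane
      have heq : h =ᶠ[𝓝 z] (fun w : ℂ => w + 2 * (starRingEnd ℂ) w) := by
        filter_upwards [(isOpen_lt Complex.continuous_im continuous_const).mem_nhds
          (show z.im < 0 from hneg)] with w hw
        rw [hdef w, if_neg (not_le.mpr hw)]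
      have hfd := (hasF_lo z).congr_of_eventuallyEq heq
      have hf := hfd.fderiv
      have e1 : fderiv ℝ h z 1 = 3 := by
        rw [hf]; simp; norm_num
      have e2 : fderiv ℝ h z Complex.I = -Complex.I := by
        rw [hf]; simp [Complex.conj_I, smul_eq_mul]; ring
      simp only [wz, wzbar, e1, e2]
      simp [mul_neg, Complex.I_mul_I, map_ofNat]
      norm_num
    · -- upper half plane
      have heq : h =ᶠ[𝓝 z] (fun w : ℂ => 2 * w + (starRingEnd ℂ) w) := by
        filter_upwards [(isOpen_lt continuous_const Complex.continuous_im).mem_nhds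
          (show 0 < z.im from hpos)] with w hw
        rw [hdef w, if_pos hw.le]
      have hfd := (hasF_up z).congr_of_eventuallyEq heq
      have hf := hfd.fderiv
      have e1 : fderiv ℝ h z 1 = 3 := by
        rw [hf]; simp [smul_eq_mul]; norm_num
      have e2 : fderiv ℝ h z Complex.I = Complex.I := by
        rw [hf]; simp [Complex.conj_I, smul_eq_mul]; ring
      simp only [wz, wzbar, e1, e2]
      simp [Complex.I_mul_I, map_ofNat]
      norm_num
  · -- not harmonic
    rintro x U hU hxU ⟨hC2, -⟩
    have hd : DifferentiableAt ℝ h (x : ℂ) :=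
      (hC2.differentiableOn (by norm_num)).differentiableAt (hU.mem_nhds hxU)
    have hψ : DifferentiableAt ℝ (fun t : ℝ => (x : ℂ) + t * Complex.I) 0 :=
      (Complex.ofRealCLM.differentiableAt.mul_const _).const_add _
    have hcomp : DifferentiableAt ℝ (fun t : ℝ => (h ((x : ℂ) + t * Complex.I)).im) 0 := by
      have h0 : ((x : ℂ) + ((0:ℝ):ℂ) * Complex.I) = (x : ℂ) := by simp
      exact Complex.imCLM.differentiableAt.comp (0:ℝ) ((h0 ▸ hd).comp (0:ℝ) hψ)
    have habs : DifferentiableAt ℝ (fun t : ℝ => |t|) 0 := by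
      apply hcomp.congr_of_eventuallyEq
      filter_upwards with t
      rw [him]
      simp
    exact not_differentiableAt_abs_zero habs
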